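/- Let X be a finite-dimensional Banach space with numerical radius a norm on L(X), Z a subspace of X, and T ∈ L(X)_w nu-smooth with M_{w(T)} = { (μ x₀, conj(μ) x₀*) : |μ| = 1 } for some x₀* ∈ E_{X*}, x₀ ∈ E_X with x₀*(x₀) = 1. If T ⊥_w L(X, Z) (i.e., w(T + λS) ≥ w(T) for all scalars λ and all bounded operators S : X → X with range in Z), then x₀ is Birkhoff–James orthogonal to Z, i.e., ‖x₀ + λz‖ ≥ ‖x₀‖ for all z ∈ Z and scalars λ. -/

import Mathlib

variable {𝕜 : Type*} [RCLike 𝕜] {X : Type*} [NormedAddCommGroup X] [NormedSpace 𝕜 X]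

/-- The numerical radius of a bounded linear operator on a Banach space. -/
noncomputable def nrad (T : X →L[𝕜] X) : ℝ :=
  sSup {r : ℝ | ∃ (x : X) (f : X →L[𝕜] 𝕜), ‖x‖ = 1 ∧ ‖f‖ = 1 ∧ f x = 1 ∧ r = ‖f (T x)‖}

/-- The functional `x* ⊗ x : T ↦ x*(Tx)` on `L(X)`. -/
noncomputable def tensor (f : X →L[𝕜] 𝕜) (x : X) : (X →L[𝕜] X) →L[𝕜] 𝕜 :=
  f.comp (ContinuousLinearMap.apply 𝕜 X x)

/-- The dual norm induced on functionals by the numerical radius norm. -/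
noncomputable def wdual (g : (X →L[𝕜] X) →L[𝕜] 𝕜) : ℝ :=
  sSup {r : ℝ | ∃ T : X →L[𝕜] X, nrad T ≤ 1 ∧ r = ‖g T‖}

/-- The set `J_w(T)` of norm-one supporting functionals of `T` in `(L(X)_w)*`. -/
noncomputable def Jw (T : X →L[𝕜] X) : Set ((X →L[𝕜] X) →L[𝕜] 𝕜) :=
  {g | wdual g = 1 ∧ g T = (nrad T : 𝕜)}

/-- The numerical radius attainment set `M_{w(T)}`. -/
noncomputable def Mw (T : X →L[𝕜] X) : Set (X × (X →L[𝕜] 𝕜)) :=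
  {p | ‖p.1‖ = 1 ∧ ‖p.2‖ = 1 ∧ p.2 p.1 = 1 ∧ ‖p.2 (T p.1)‖ = nrad T}

section helpers

lemma nrad_nonneg (T : X →L[𝕜] X) : 0 ≤ nrad T := by
  apply Real.sSup_nonneg
  rintro r ⟨x, f, _, _, _, rfl⟩; positivity

lemma nrad_le_norm (T : X →L[𝕜] X) :
    ∀ r ∈ {r : ℝ | ∃ (x : X) (f : X →L[𝕜] 𝕜), ‖x‖ = 1 ∧ ‖f‖ = 1 ∧ f x = 1 ∧ r = ‖f (T x)‖},
      r ≤ ‖T‖ := by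
  rintro r ⟨x, f, hx, hf, _, rfl⟩
  have h1 := f.le_opNorm (T x)
  have h2 := T.le_opNorm x
  rw [hf, one_mul] at h1
  rw [hx, mul_one] at h2
  linarith

lemma apply_le_nrad (T : X →L[𝕜] X) (x : X) (f : X →L[𝕜] 𝕜)
    (hx : ‖x‖ = 1) (hf : ‖f‖ = 1) (hfx : f x = 1) : ‖f (T x)‖ ≤ nrad T :=
  le_csSup ⟨‖T‖, fun r hr => nrad_le_norm T r hr⟩ ⟨x, f, hx, hf, hfx, rfl⟩

lemma pairSet_isClosed : IsClosed {p : X × (X →L[𝕜] 𝕜) | ‖p.1‖ = 1 ∧ ‖p.2‖ = 1 ∧ p.2 p.1 = 1} := by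
  have h1 : IsClosed {p : X × (X →L[𝕜] 𝕜) | ‖p.1‖ = 1} :=
    isClosed_eq (continuous_fst.norm) continuous_const
  have h2 : IsClosed {p : X × (X →L[𝕜] 𝕜) | ‖p.2‖ = 1} :=
    isClosed_eq (continuous_snd.norm) continuous_const
  have h3 : IsClosed {p : X × (X →L[𝕜] 𝕜) | p.2 p.1 = 1} :=
    isClosed_eq (isBoundedBilinearMap_apply.continuous.comp
      (continuous_snd.prodMk continuous_fst)) continuous_const
  have : {p : X × (X →L[𝕜] 𝕜) | ‖p.1‖ = 1 ∧ ‖p.2‖ = 1 ∧ p.2 p.1 = 1}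
      = ({p : X × (X →L[𝕜] 𝕜) | ‖p.1‖ = 1} ∩ {p | ‖p.2‖ = 1}) ∩ {p | p.2 p.1 = 1} := by
    ext p
    constructor
    · rintro ⟨a, b, c⟩; exact ⟨⟨a, b⟩, c⟩
    · rintro ⟨⟨a, b⟩, c⟩; exact ⟨a, b, c⟩
  rw [this]
  exact (h1.inter h2).inter h3

/-- In a finite-dimensional space, the numerical radius is attained, provided
there is at least one normalized pair. -/
lemma nrad_attained [FiniteDimensional 𝕜 X] (T : X →L[𝕜] X)
    (x₁ : X) (f₁ : X →L[𝕜] 𝕜) (hx₁ : ‖x₁‖ = 1) (hf₁ : ‖f₁‖ = 1) (hfx₁ : f₁ x₁ = 1) :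
    ∃ p : X × (X →L[𝕜] 𝕜), ‖p.1‖ = 1 ∧ ‖p.2‖ = 1 ∧ p.2 p.1 = 1 ∧ ‖p.2 (T p.1)‖ = nrad T := by
  haveI : ProperSpace X := FiniteDimensional.proper 𝕜 X
  haveI : ProperSpace (X →L[𝕜] 𝕜) := FiniteDimensional.proper 𝕜 _
  set K : Set (X × (X →L[𝕜] 𝕜)) := {p | ‖p.1‖ = 1 ∧ ‖p.2‖ = 1 ∧ p.2 p.1 = 1} with hK
  have hKc : IsCompact K := by
    have hclosed : IsClosed K := pairSet_isClosed
    have hbdd : Bornology.IsBounded K := by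
      apply Bornology.IsBounded.subset (Metric.isBounded_closedBall (x := (0 : X × (X →L[𝕜] 𝕜))) (r := 1))
      rintro p ⟨h1, h2, _⟩
      rw [Metric.mem_closedBall, dist_zero_right, Prod.norm_def]
      exact max_le h1.le h2.le
    exact Metric.isCompact_of_isClosed_isBounded hclosed hbdd
  have hKne : K.Nonempty := ⟨(x₁, f₁), hx₁, hf₁, hfx₁⟩
  obtain ⟨p₀, hp₀K, hmax⟩ := hKc.exists_isMaxOn hKne
    ((isBoundedBilinearMap_apply.continuous.comp
      (continuous_snd.prodMk (T.continuous.comp continuous_fst))).norm.continuousOn)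
  refine ⟨p₀, hp₀K.1, hp₀K.2.1, hp₀K.2.2, ?_⟩
  have : nrad T = ‖p₀.2 (T p₀.1)‖ := by
    apply IsGreatest.csSup_eq
    constructor
    · exact ⟨p₀.1, p₀.2, hp₀K.1, hp₀K.2.1, hp₀K.2.2, rfl⟩
    · rintro r ⟨x, f, hx, hf, hfx, rfl⟩
      exact hmax (⟨hx, hf, hfx⟩ : (x, f) ∈ K)
  exact this.symm

/-- nu-smoothness implies `nrad T ≠ 0`. -/
lemma nrad_ne_zero_of_smooth (T : X →L[𝕜] X) (hsm : ∃ g, Jw T = {g}) : nrad T ≠ 0 := by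
  intro h0
  obtain ⟨g, hg⟩ := hsm
  have hgJ : g ∈ Jw T := hg ▸ rfl
  have hnegJ : -g ∈ Jw T := by
    constructor
    · have : {r : ℝ | ∃ T' : X →L[𝕜] X, nrad T' ≤ 1 ∧ r = ‖(-g) T'‖}
          = {r : ℝ | ∃ T' : X →L[𝕜] X, nrad T' ≤ 1 ∧ r = ‖g T'‖} := by
        ext r; simp
      rw [wdual, this]; exact hgJ.1
    · rw [ContinuousLinearMap.neg_apply, hgJ.2, h0]
      norm_num
  have : -g = g := by rw [hg] at hnegJ; exact hnegJ
  have hg0 : g = 0 := by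
    ext R
    have h2 := congrArg (fun h => h R) this
    simp only [ContinuousLinearMap.neg_apply] at h2
    simp only [ContinuousLinearMap.zero_apply]
    linear_combination (-(1/2) : 𝕜) * h2
  have h1 : wdual (0 : (X →L[𝕜] X) →L[𝕜] 𝕜) = 1 := hg0 ▸ hgJ.1
  have : wdual (0 : (X →L[𝕜] X) →L[𝕜] 𝕜) = 0 := by
    have hset : {r : ℝ | ∃ T' : X →L[𝕜] X, nrad T' ≤ 1 ∧ r = ‖(0 : (X →L[𝕜] X) →L[𝕜] 𝕜) T'‖} = {0} := by
      ext r
      constructor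
      · rintro ⟨T', _, rfl⟩; simp
      · rintro rfl
        refine ⟨0, ?_, by simp⟩
        apply Real.sSup_le _ zero_le_one
        rintro r ⟨x, f, _, _, _, rfl⟩; simp
    rw [wdual, hset, csSup_singleton]
  rw [this] at h1; norm_num at h1

open RCLike in
lemma norm_sub_real_mul_sq (u a : 𝕜) (t : ℝ) :
    ‖u - (t:𝕜) * a‖^2 = ‖u‖^2 - 2*t*RCLike.re ((starRingEnd 𝕜 a) * u) + t^2*‖a‖^2 := by
  have h := @norm_sub_sq 𝕜 𝕜 _ _ _ u ((t:𝕜)*a)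
  simp only [RCLike.inner_apply] at h
  rw [h]
  have : ((t:𝕜)*a) * (starRingEnd 𝕜 u) = (t:𝕜) * ((starRingEnd 𝕜 u) * a) := by ring
  rw [this]
  have h2 : RCLike.re ((t:𝕜) * ((starRingEnd 𝕜 u) * a)) = t * RCLike.re ((starRingEnd 𝕜 u) * a) := by
    rw [RCLike.re_ofReal_mul]
  rw [h2]
  have h3 : RCLike.re ((starRingEnd 𝕜 u) * a) = RCLike.re ((starRingEnd 𝕜 a) * u) := by
    rw [← RCLike.conj_re]
    simp [map_mul, mul_comm]
  rw [h3]
  have h4 : ‖(t:𝕜)*a‖^2 = t^2*‖a‖^2 := by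
    rw [norm_mul, mul_pow, RCLike.norm_ofReal, sq_abs]
  rw [h4]; ring

end helpers

lemma contradiction_arith (A t U Q D R : ℝ) (hApos : 0 < A) (htpos : 0 < t)
    (ht : t ≤ 1/4) (hUB : U ≤ A) (hUnn : 0 ≤ U) (hD : D ≤ A/8) (hDnn : 0 ≤ D)
    (hR : 3/4*A^2 ≤ R) (hlb : A - t*D ≤ Q) (hQnn : 0 ≤ Q)
    (hq : Q^2 = U^2 - 2*t*R + t^2*A^2) : False := by
  have h1 : Q ≥ A*(1 - t/8) := by nlinarith [mul_le_mul_of_nonneg_left hD htpos.le]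
  have h2 : A*(1 - t/8) ≥ 0 := by nlinarith
  have h3 : Q^2 ≥ (A*(1 - t/8))^2 := by nlinarith
  have h4 : U^2 ≤ A^2 := by nlinarith
  have h5 : t*t ≤ t*(1/4) := mul_le_mul_of_nonneg_left ht htpos.le
  have h6 : (t*t)*A^2 ≤ (t*(1/4))*A^2 := mul_le_mul_of_nonneg_right h5 (sq_nonneg A)
  have h7 : t*(3/4*A^2) ≤ t*R := mul_le_mul_of_nonneg_left hR htpos.le
  have h8 : t*(t*A^2) ≤ t*(1/4*A^2) := by nlinarith
  nlinarith [mul_pos htpos (mul_pos hApos hApos)]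

/-- If `T` is nu-smooth with `M_{w(T)} = {(μx₀, conj(μ)x₀*)}` and `T ⊥_w L(X,Z)`, then
`x₀ ⊥_B Z`. -/
theorem stmt_18 {X : Type*} [NormedAddCommGroup X] [NormedSpace 𝕜 X]
    [NormedSpace ℝ X] [IsScalarTower ℝ 𝕜 X] [FiniteDimensional 𝕜 X]
    (hw : ∀ T : X →L[𝕜] X, nrad T = 0 → T = 0)
    (Z : Submodule 𝕜 X) (T : X →L[𝕜] X) (hsm : ∃ g, Jw T = {g})
    (x₀ : X) (f₀ : X →L[𝕜] 𝕜)
    (hx₀ : x₀ ∈ Set.extremePoints ℝ (Metric.closedBall (0 : X) 1))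
    (hf₀ : f₀ ∈ Set.extremePoints ℝ (Metric.closedBall (0 : X →L[𝕜] 𝕜) 1))
    (hfx : f₀ x₀ = 1)
    (hM : Mw T = {p | ∃ μ : 𝕜, ‖μ‖ = 1 ∧ p = (μ • x₀, (starRingEnd 𝕜 μ) • f₀)})
    (horth : ∀ S : X →L[𝕜] X, (∀ v : X, S v ∈ Z) →
      ∀ c : 𝕜, nrad T ≤ nrad (T + c • S)) :
    ∀ z ∈ Z, ∀ c : 𝕜, ‖x₀‖ ≤ ‖x₀ + c • z‖ := by
  -- (x₀, f₀) ∈ Mw T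
  have hpair : ((x₀, f₀) : X × (X →L[𝕜] 𝕜)) ∈ Mw T := by
    rw [hM]
    exact ⟨1, by simp, by simp⟩
  obtain ⟨hx1, hf1, -, ha⟩ := hpair
  simp only at hx1 hf1 ha
  set A := nrad T with hA
  have hApos : 0 < A := lt_of_le_of_ne (nrad_nonneg T) (Ne.symm (nrad_ne_zero_of_smooth T hsm))
  set a : 𝕜 := f₀ (T x₀) with ha'
  have hanorm : ‖a‖ = A := ha
  -- Main claim: f₀ vanishes on Z.
  have key : ∀ z ∈ Z, f₀ z = 0 := by
    intro z hz
    by_contra hβ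
    set β : 𝕜 := f₀ z with hβ'
    set S : X →L[𝕜] X := f₀.smulRight z with hS
    have hSZ : ∀ v : X, S v ∈ Z := fun v => Z.smul_mem _ hz
    -- sequence of small parameters
    set ε : ℕ → ℝ := fun n => 1 / (n + 1) with hε
    have hεpos : ∀ n, 0 < ε n := fun n => by positivity
    set c : ℕ → 𝕜 := fun n => -((ε n : ℝ) : 𝕜) * a / β with hc
    -- attainment pairs for T + c n • S
    have hatt : ∀ n : ℕ, ∃ p : X × (X →L[𝕜] 𝕜),
        ‖p.1‖ = 1 ∧ ‖p.2‖ = 1 ∧ p.2 p.1 = 1 ∧ ‖p.2 ((T + c n • S) p.1)‖ = nrad (T + c n • S) :=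
      fun n => nrad_attained (T + c n • S) x₀ f₀ hx1 hf1 hfx
    choose p hp1 hp2 hp3 hp4 using hatt
    -- compactness: subsequence converging
    haveI : ProperSpace X := FiniteDimensional.proper 𝕜 X
    haveI : ProperSpace (X →L[𝕜] 𝕜) := FiniteDimensional.proper 𝕜 _
    set K : Set (X × (X →L[𝕜] 𝕜)) := Metric.closedBall 0 1 with hK
    have hKc : IsCompact K := isCompact_closedBall _ _
    have hpK : ∀ n, p n ∈ K := by
      intro n
      rw [hK, Metric.mem_closedBall, dist_zero_right, Prod.norm_def]
      exact max_le (hp1 n).le (hp2 n).le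
    obtain ⟨q, hqK, φ, hφ, hconv⟩ := hKc.tendsto_subseq hpK
    -- limit pair properties
    have hcont : Continuous (fun p : X × (X →L[𝕜] 𝕜) => p.2 (T p.1)) :=
      isBoundedBilinearMap_apply.continuous.comp
        (continuous_snd.prodMk (T.continuous.comp continuous_fst))
    have hcontS : Continuous (fun p : X × (X →L[𝕜] 𝕜) => p.2 (S p.1)) :=
      isBoundedBilinearMap_apply.continuous.comp
        (continuous_snd.prodMk (S.continuous.comp continuous_fst))
    have hcontE : Continuous (fun p : X × (X →L[𝕜] 𝕜) => p.2 p.1) :=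
      isBoundedBilinearMap_apply.continuous.comp (continuous_snd.prodMk continuous_fst)
    -- u n, v n
    set u : ℕ → 𝕜 := fun n => (p (φ n)).2 (T (p (φ n)).1) with hu
    set v : ℕ → 𝕜 := fun n => (p (φ n)).2 (S (p (φ n)).1) with hv
    have huconv : Filter.Tendsto u Filter.atTop (nhds (q.2 (T q.1))) :=
      (hcont.tendsto q).comp hconv
    have hvconv : Filter.Tendsto v Filter.atTop (nhds (q.2 (S q.1))) :=
      (hcontS.tendsto q).comp hconv
    -- limit pair norms
    have hqmem : q ∈ {p : X × (X →L[𝕜] 𝕜) | ‖p.1‖ = 1 ∧ ‖p.2‖ = 1 ∧ p.2 p.1 = 1} :=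
      pairSet_isClosed.mem_of_tendsto hconv
        (Filter.Eventually.of_forall fun n => ⟨hp1 (φ n), hp2 (φ n), hp3 (φ n)⟩)
    obtain ⟨hq1, hq2, hq3⟩ := hqmem
    -- c n → 0
    have hεconv : Filter.Tendsto ε Filter.atTop (nhds 0) := by
      rw [hε]; exact tendsto_one_div_add_atTop_nhds_zero_nat
    have hεφconv : Filter.Tendsto (fun n => ε (φ n)) Filter.atTop (nhds 0) :=
      hεconv.comp hφ.tendsto_atTop
    have hcconv : Filter.Tendsto (fun n => c (φ n)) Filter.atTop (nhds 0) := by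
      have : Filter.Tendsto (fun n => ((ε (φ n) : ℝ) : 𝕜)) Filter.atTop (nhds 0) := by
        have := (RCLike.continuous_ofReal (K := 𝕜)).tendsto (0:ℝ)
        simpa [Function.comp_def] using this.comp hεφconv
      have h2 : Filter.Tendsto (fun n => -((ε (φ n) : ℝ) : 𝕜) * a / β) Filter.atTop (nhds (-(0:𝕜) * a / β)) := by
        exact ((this.neg).mul_const a).div_const β
      simp only [neg_zero, zero_mul, zero_div] at h2
      exact h2
    -- nrad T ≤ ‖u n‖ + ‖c (φ n)‖ * ‖v n‖
    have hlow : ∀ n, A ≤ ‖u n + c (φ n) * v n‖ := by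
      intro n
      have h1 : A ≤ nrad (T + c (φ n) • S) := horth S hSZ _
      have h2 : (p (φ n)).2 ((T + c (φ n) • S) (p (φ n)).1) = u n + c (φ n) * v n := by
        simp [hu, hv, ContinuousLinearMap.add_apply, ContinuousLinearMap.smul_apply, mul_comm]
      calc A ≤ nrad (T + c (φ n) • S) := h1
        _ = ‖u n + c (φ n) * v n‖ := by rw [← hp4 (φ n), h2]
    -- q ∈ Mw T
    have hqM : q ∈ Mw T := by
      refine ⟨hq1, hq2, hq3, le_antisymm (apply_le_nrad T q.1 q.2 hq1 hq2 hq3) ?_⟩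
      have hbig : Filter.Tendsto (fun n => ‖u n + c (φ n) * v n‖) Filter.atTop
          (nhds ‖q.2 (T q.1) + 0 * q.2 (S q.1)‖) :=
        ((huconv.add (hcconv.mul hvconv))).norm
      have : A ≤ ‖q.2 (T q.1) + 0 * q.2 (S q.1)‖ := le_of_tendsto_of_tendsto tendsto_const_nhds hbig
        (Filter.Eventually.of_forall hlow)
      simpa using this
    rw [hM] at hqM
    obtain ⟨μ, hμ, hqeq⟩ := hqM
    have hμμ : (starRingEnd 𝕜 μ) * μ = 1 := by
      rw [RCLike.conj_mul]
      norm_cast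
      rw [hμ]; norm_num
    have hq1' : q.1 = μ • x₀ := by rw [hqeq]
    have hq2' : q.2 = (starRingEnd 𝕜 μ) • f₀ := by rw [hqeq]
    have hulim : q.2 (T q.1) = a := by
      rw [hq1', hq2']
      simp only [ContinuousLinearMap.smul_apply, map_smul, smul_eq_mul]
      rw [← mul_assoc, mul_comm μ, hμμ, one_mul]
    have hvlim : q.2 (S q.1) = β := by
      rw [hq1', hq2']
      simp only [hS, ContinuousLinearMap.smul_apply, map_smul, smul_eq_mul,
        ContinuousLinearMap.smulRight_apply]
      rw [hfx, one_mul, ← mul_assoc, mul_comm μ, hμμ, one_mul]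
    rw [hulim] at huconv
    rw [hvlim] at hvconv
    -- Now the quantitative contradiction.
    -- w n := (a/β) * v n → a ; u n → a ; ‖u n‖ ≤ A ; ‖u n - ε (φ n) • w n‖ ≥ A
    set w : ℕ → 𝕜 := fun n => a / β * v n with hw'
    have hwconv : Filter.Tendsto w Filter.atTop (nhds a) := by
      have := hvconv.const_mul (a / β)
      simpa [div_mul_cancel₀, hβ] using this
    have hlow' : ∀ n, A ≤ ‖u n - ((ε (φ n) : ℝ) : 𝕜) * w n‖ := by
      intro n
      have : c (φ n) * v n = -(((ε (φ n) : ℝ) : 𝕜) * w n) := by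
        rw [hc, hw']; ring
      have h := hlow n
      rwa [this, ← sub_eq_add_neg] at h
    have hub : ∀ n, ‖u n‖ ≤ A :=
      fun n => apply_le_nrad T _ _ (hp1 (φ n)) (hp2 (φ n)) (hp3 (φ n))
    -- eventual bounds
    have hdconv : Filter.Tendsto (fun n => ‖w n - a‖) Filter.atTop (nhds 0) := by
      have := (hwconv.sub_const a).norm
      simpa using this
    have hrconv : Filter.Tendsto (fun n => RCLike.re ((starRingEnd 𝕜 a) * u n)) Filter.atTop
        (nhds (RCLike.re ((starRingEnd 𝕜 a) * a))) := by
      exact (RCLike.continuous_re.tendsto _).comp ((huconv.const_mul _))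
    have hra : RCLike.re ((starRingEnd 𝕜 a) * a) = A^2 := by
      rw [RCLike.conj_mul]; norm_cast; rw [hanorm]
    rw [hra] at hrconv
    have hev1 : ∀ᶠ n in Filter.atTop, ‖w n - a‖ ≤ A/8 :=
      hdconv.eventually_le_const (by positivity)
    have hev2 : ∀ᶠ n in Filter.atTop, (3/4)*A^2 ≤ RCLike.re ((starRingEnd 𝕜 a) * u n) := by
      apply hrconv.eventually_const_le
      nlinarith
    have hev3 : ∀ᶠ n in Filter.atTop, ε (φ n) ≤ 1/4 :=
      hεφconv.eventually_le_const (by norm_num)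
    obtain ⟨n, h1, h2, h3⟩ := (hev1.and (hev2.and hev3)).exists
    set t := ε (φ n) with ht
    have htpos : 0 < t := hεpos (φ n)
    -- lower bound for ‖u n - t a‖
    have hlb : A - t * ‖w n - a‖ ≤ ‖u n - (t:𝕜) * a‖ := by
      have : ‖u n - (t:𝕜) * w n‖ ≤ ‖u n - (t:𝕜) * a‖ + ‖(t:𝕜) * (w n - a)‖ := by
        have : u n - (t:𝕜) * w n = (u n - (t:𝕜) * a) - (t:𝕜) * (w n - a) := by ring
        rw [this]; exact norm_sub_le _ _
      have h' := hlow' n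
      have hnorm : ‖(t:𝕜) * (w n - a)‖ = t * ‖w n - a‖ := by
        rw [norm_mul, RCLike.norm_ofReal, abs_of_pos htpos]
      linarith
    exact contradiction_arith A t ‖u n‖ ‖u n - (t:𝕜) * a‖ ‖w n - a‖
      (RCLike.re ((starRingEnd 𝕜 a) * u n)) hApos htpos h3 (hub n) (norm_nonneg _)
      h1 (norm_nonneg _) h2 hlb (norm_nonneg _) (by rw [norm_sub_real_mul_sq, hanorm])
  -- conclude Birkhoff-James orthogonality
  intro z hz c
  have hz0 : f₀ z = 0 := key z hz
  have : ‖f₀ (x₀ + c • z)‖ ≤ ‖x₀ + c • z‖ := by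
    calc ‖f₀ (x₀ + c • z)‖ ≤ ‖f₀‖ * ‖x₀ + c • z‖ := f₀.le_opNorm _
      _ = ‖x₀ + c • z‖ := by rw [hf1, one_mul]
  have h1 : f₀ (x₀ + c • z) = 1 := by
    rw [map_add, hfx, map_smul, hz0, smul_zero, add_zero]
  rw [h1] at this
  simpa [hx1] using this
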